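/- Let char k = 2 and f = Σ_j ℓ_j(y) x_j^2 + g(y) a homogeneous cubic where ℓ_j are linear forms and g is a cubic in the y-variables, with at least one x-variable present. Then the hypersurface X = {f = 0} ⊂ P^{n+1} is singular over the algebraic closure. -/

import Mathlib

open MvPolynomial Finsupp

section Aux
variable {σ : Type*} {R : Type*} [CommRing R]

lemma euler_monomial [Fintype σ] [DecidableEq σ] (m : σ →₀ ℕ) (c : R) :
    ∑ v : σ, X v * pderiv v (monomial m c) = m.degree • monomial m c := by
  have key : ∀ v : σ, X v * pderiv v (monomial m c) = (m v) • monomial m c := by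
    intro v
    rw [pderiv_monomial]
    by_cases h : m v = 0
    · simp [h]
    · have h1 : Finsupp.single v 1 ≤ m := by
        rw [Finsupp.single_le_iff]; omega
      rw [X, monomial_mul, one_mul]
      rw [show Finsupp.single v 1 + (m - Finsupp.single v 1) = m from by
        rw [add_comm]; exact tsub_add_cancel_of_le h1]
      rw [smul_monomial]
      congr 1
      rw [nsmul_eq_mul, mul_comm]
  rw [Finset.sum_congr rfl (fun v _ => key v), ← Finset.sum_smul]
  congr 1
  rw [Finsupp.degree]
  exact (Finset.sum_subset (Finset.subset_univ _) (fun x _ hx => by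
    simpa using Finsupp.notMem_support_iff.mp hx)).symm

lemma euler_identity [Fintype σ] {φ : MvPolynomial σ R} {n : ℕ} (h : φ.IsHomogeneous n) :
    ∑ v : σ, X v * pderiv v φ = n • φ := by
  classical
  conv_lhs => rw [φ.as_sum]
  conv_rhs => rw [φ.as_sum]
  rw [Finset.smul_sum]
  have : ∀ v : σ, X v * pderiv v (∑ m ∈ φ.support, monomial m (coeff m φ))
      = ∑ m ∈ φ.support, X v * pderiv v (monomial m (coeff m φ)) := by
    intro v; rw [map_sum, Finset.mul_sum]
  rw [Finset.sum_congr rfl fun v _ => this v, Finset.sum_comm]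
  refine Finset.sum_congr rfl fun m hm => ?_
  have hd : m.degree = n := by
    rw [Finsupp.degree_eq_weight_one]; exact h (MvPolynomial.mem_support_iff.mp hm)
  rw [← hd]
  exact euler_monomial m (coeff m φ)

lemma degree_eq_sum_univ [Fintype σ] (m : σ →₀ ℕ) : m.degree = ∑ v : σ, m v :=
  Finset.sum_subset (Finset.subset_univ _) (fun x _ hx => by
    simpa using Finsupp.notMem_support_iff.mp hx)

lemma isHomogeneous_of_coeff {φ : MvPolynomial σ R} {n : ℕ}
    (h : ∀ m : σ →₀ ℕ, coeff m φ ≠ 0 → m.degree = n) : φ.IsHomogeneous n := by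
  intro d hd
  have := h d hd; rw [Finsupp.degree_eq_weight_one] at this
  exact this

lemma pderiv_isHomogeneous [Fintype σ] {φ : MvPolynomial σ R} {n : ℕ}
    (h : φ.IsHomogeneous n) (v : σ) : (pderiv v φ).IsHomogeneous (n - 1) := by
  classical
  conv in pderiv v φ => rw [φ.as_sum]
  rw [map_sum]
  refine IsHomogeneous.sum _ _ _ fun m hm => ?_
  rw [pderiv_monomial]
  by_cases h0 : m v = 0
  · simp only [h0, Nat.cast_zero, mul_zero, map_zero]
    exact isHomogeneous_zero _ _ _
  · refine isHomogeneous_monomial _ ?_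
    have hd : m.degree = n := by
      rw [Finsupp.degree_eq_weight_one]; exact h (MvPolynomial.mem_support_iff.mp hm)
    have h1 : (1:ℕ) ≤ m v := by omega
    have key : ∀ w : σ, ((m - Finsupp.single v 1) : σ →₀ ℕ) w
        = m w - (Finsupp.single v 1) w := fun w => Finsupp.tsub_apply m _ w
    calc (m - Finsupp.single v 1).degree
        = ∑ w : σ, ((m - Finsupp.single v 1) : σ →₀ ℕ) w := degree_eq_sum_univ _
      _ = ∑ w : σ, (m w - (Finsupp.single v 1) w) := Finset.sum_congr rfl fun w _ => key w
      _ = (∑ w : σ, m w) - (∑ w : σ, (Finsupp.single v 1) w) := by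
          rw [Finset.sum_tsub_distrib]
          intro w _
          rw [Finsupp.single_apply]
          split
          · next h' => subst h'; omega
          · omega
      _ = (∑ w : σ, m w) - 1 := by
          congr 1
          simp [Finsupp.single_apply]
      _ = n - 1 := by rw [← hd, degree_eq_sum_univ]

end Aux

section Key
variable {K : Type*} [Field K] {σ : Type*}

lemma homogComponent_mul_right {h F : MvPolynomial σ K} {d D : ℕ}
    (hF : F.IsHomogeneous d) (hdD : d ≤ D) :
    homogeneousComponent D (h * F) = homogeneousComponent (D - d) h * F := by
  conv_lhs => rw [show h * F = (∑ e ∈ Finset.range (h.totalDegree + 1),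
    homogeneousComponent e h) * F from by rw [sum_homogeneousComponent]]
  rw [Finset.sum_mul, map_sum]
  have step : ∀ e, homogeneousComponent D (homogeneousComponent e h * F)
      = if e = D - d then homogeneousComponent e h * F else 0 := by
    intro e
    have hmem : homogeneousComponent e h * F ∈ homogeneousSubmodule σ K (e + d) :=
      mem_homogeneousSubmodule _ _ |>.mpr ((homogeneousComponent_isHomogeneous e h).mul hF)
    rw [homogeneousComponent_of_mem hmem]
    congr 1
    simp only [eq_iff_iff]
    omega
  rw [Finset.sum_congr rfl fun e _ => step e, Finset.sum_ite_eq' (Finset.range _) (D - d)]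
  split
  · rfl
  · next hnot =>
    rw [homogeneousComponent_eq_zero, zero_mul]
    simp only [Finset.mem_range] at hnot
    omega

theorem key_common_zero [IsAlgClosed K] [Fintype σ]
    {r d : ℕ} (hr : r < Fintype.card σ) (hd : 1 ≤ d)
    (F : Fin r → MvPolynomial σ K) (hF : ∀ i, (F i).IsHomogeneous d) :
    ∃ p : σ → K, p ≠ 0 ∧ ∀ i, eval p (F i) = 0 := by
  classical
  have hσ : Nonempty σ := Fintype.card_pos_iff.mp (by omega)
  by_contra hcon
  push_neg at hcon
  have hcon' : ∀ p : σ → K, p ≠ 0 → ∃ i, eval p (F i) ≠ 0 := fun p hp => by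
    obtain ⟨i, hi⟩ := hcon p hp
    exact ⟨i, hi⟩
  -- remaining: derive a contradiction
  set I : Ideal (MvPolynomial σ K) := Ideal.span (Set.range F) with hI
  have hsub : MvPolynomial.zeroLocus K I ⊆ {0} := by
    intro x hx
    by_contra hx0
    obtain ⟨i, hi⟩ := hcon' x (by simpa using hx0)
    have h0 := (MvPolynomial.mem_zeroLocus_iff).mp hx (F i)
      (Ideal.subset_span (Set.mem_range_self i))
    exact hi h0
  have hXrad : ∀ j : σ, (X j : MvPolynomial σ K) ∈ I.radical := by
    intro j
    rw [← MvPolynomial.vanishingIdeal_zeroLocus_eq_radical (K := K)]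
    rw [MvPolynomial.mem_vanishingIdeal_iff]
    intro x hx
    have : x = 0 := hsub hx
    simp [this]
  choose Mf hMf using fun j => (Ideal.mem_radical_iff.mp (hXrad j))
  set M : ℕ := (Finset.univ.sup Mf) + 1 with hMdef
  have hM : ∀ j : σ, (X j : MvPolynomial σ K) ^ M ∈ I := by
    intro j
    have hle : Mf j ≤ Finset.univ.sup Mf := Finset.le_sup (Finset.mem_univ j)
    rw [show M = (M - Mf j) + Mf j from by omega, pow_add]
    exact I.mul_mem_left _ (hMf j)
  set n : ℕ := Fintype.card σ with hn
  set D0 : ℕ := n * M + d with hD0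
  set π : (Fin r → ℕ) × (σ →₀ ℕ) → MvPolynomial σ K :=
    fun q => (∏ i, F i ^ q.1 i) * monomial q.2 1 with hπ
  set S : ℕ → Set (MvPolynomial σ K) :=
    fun D => π '' {q | (∑ i, q.1 i * d) + q.2.degree = D ∧ q.2.degree < D0} with hS
  have hDegMem : ∀ (p : MvPolynomial σ K) (D : ℕ), p.IsHomogeneous D →
      ∀ m ∈ p.support, Finsupp.degree m = D := by
    intro p D hp m hm
    rw [Finsupp.degree_eq_weight_one]
    exact hp (MvPolynomial.mem_support_iff.mp hm)
  have claimA : ∀ D (p : MvPolynomial σ K), p.IsHomogeneous D →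
      p ∈ Submodule.span K (S D) := by
    intro D
    induction D using Nat.strong_induction_on with
    | _ D IH =>
    intro p hp
    by_cases hD : D < D0
    · -- low degree: p is a combination of its monomials
      rw [p.as_sum]
      refine Submodule.sum_mem _ fun m hm => ?_
      have hdeg : Finsupp.degree m = D := hDegMem p D hp m hm
      have hval : monomial m (coeff m p) = (coeff m p) • π (0, m) := by
        simp only [hπ, Pi.zero_apply, pow_zero, Finset.prod_const_one, one_mul,
          smul_monomial, smul_eq_mul, mul_one]
      rw [hval]
      exact Submodule.smul_mem _ _ (Submodule.subset_span
        ⟨(0, m), ⟨by show (∑ i, (0 : Fin r → ℕ) i * d) + m.degree = D; simp [hdeg],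
          by show m.degree < D0; omega⟩, rfl⟩)
    · -- high degree: p ∈ I
      push_neg at hD
      have hpI : p ∈ I := by
        rw [p.as_sum]
        refine Submodule.sum_mem _ fun m hm => ?_
        have hdeg : Finsupp.degree m = D := hDegMem p D hp m hm
        -- some exponent is at least M
        have hex : ∃ s : σ, M ≤ m s := by
          by_contra hno
          push_neg at hno
          have : Finsupp.degree m ≤ n * (M - 1) := by
            rw [show Finsupp.degree m = ∑ v : σ, m v from Finset.sum_subset
              (Finset.subset_univ _) (fun x _ hx => by
                simpa using Finsupp.notMem_support_iff.mp hx)]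
            calc ∑ v : σ, m v ≤ ∑ _v : σ, (M - 1) :=
                  Finset.sum_le_sum (fun v _ => by have := hno v; omega)
              _ = n * (M - 1) := by rw [Finset.sum_const, smul_eq_mul, Finset.card_univ]
          have hnm : n * (M - 1 + 1) = n * (M - 1) + n := Nat.mul_succ n (M - 1)
          have hM1 : M - 1 + 1 = M := by omega
          rw [hM1] at hnm
          omega
        obtain ⟨s, hs⟩ := hex
        have hsm : Finsupp.single s M ≤ m := by rw [Finsupp.single_le_iff]; exact hs
        have : monomial m (coeff m p)
            = monomial (m - Finsupp.single s M) (coeff m p) * (X s) ^ M := by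
          rw [X_pow_eq_monomial, monomial_mul, mul_one, tsub_add_cancel_of_le hsm]
        rw [this]
        exact I.mul_mem_left _ (hM s)
      obtain ⟨c, hc⟩ := (Ideal.mem_span_range_iff_exists_fun).mp hpI
      have hple : p = ∑ i, homogeneousComponent (D - d) (c i) * F i := by
        have h1 : homogeneousComponent D p = p := by
          rw [homogeneousComponent_of_mem ((mem_homogeneousSubmodule _ _).mpr hp), if_pos rfl]
        conv_lhs => rw [← h1, ← hc]
        rw [map_sum]
        exact Finset.sum_congr rfl fun i _ =>
          homogComponent_mul_right (hF i) (by omega)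
      rw [hple]
      refine Submodule.sum_mem _ fun i _ => ?_
      have hci : (homogeneousComponent (D - d) (c i)).IsHomogeneous (D - d) :=
        homogeneousComponent_isHomogeneous _ _
      have hmem := IH (D - d) (by omega) _ hci
      have himg : homogeneousComponent (D - d) (c i) * F i ∈
          Submodule.span K ((fun x => x * F i) '' S (D - d)) := by
        have := Submodule.mem_map_of_mem (f := LinearMap.mulRight K (F i)) hmem
        rwa [Submodule.map_span] at this
      refine Submodule.span_le.mpr ?_ himg
      rintro _ ⟨_, ⟨q, ⟨hq1, hq2⟩, rfl⟩, rfl⟩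
      have upd_sum : ∑ x, Function.update q.1 i (q.1 i + 1) x * d
          = (∑ x, q.1 x * d) + d := by
        rw [← Finset.add_sum_erase _ (fun x => Function.update q.1 i (q.1 i + 1) x * d)
            (Finset.mem_univ i),
          ← Finset.add_sum_erase _ (fun x => q.1 x * d) (Finset.mem_univ i),
          Finset.sum_congr rfl (fun x hx => by
            rw [Function.update_of_ne (Finset.ne_of_mem_erase hx)]),
          Function.update_self, Nat.add_mul, one_mul]
        omega
      have upd_prod : ∏ x, F x ^ Function.update q.1 i (q.1 i + 1) x
          = (∏ x, F x ^ q.1 x) * F i := by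
        rw [← Finset.mul_prod_erase _ (fun x => F x ^ Function.update q.1 i (q.1 i + 1) x)
            (Finset.mem_univ i),
          ← Finset.mul_prod_erase _ (fun x => F x ^ q.1 x) (Finset.mem_univ i),
          Finset.prod_congr rfl (fun x hx => by
            rw [Function.update_of_ne (Finset.ne_of_mem_erase hx)]),
          Function.update_self, pow_succ]
        ring
      refine Submodule.subset_span ⟨(Function.update q.1 i (q.1 i + 1), q.2), ⟨?_, hq2⟩, ?_⟩
      · show (∑ x, Function.update q.1 i (q.1 i + 1) x * d) + q.2.degree = D
        rw [upd_sum]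
        omega
      · show (∏ x, F x ^ Function.update q.1 i (q.1 i + 1) x) * monomial q.2 1
          = (∏ x, F x ^ q.1 x) * monomial q.2 1 * F i
        rw [upd_prod]
        ring
  -- trivial case r = 0
  rcases Nat.eq_zero_or_pos r with hr0 | hr0
  · obtain ⟨i, _⟩ := hcon' (fun _ => 1) (by
      intro h0
      have := congrFun h0 (Classical.arbitrary σ)
      simp at this)
    exact absurd i.isLt (by omega)
  obtain ⟨r', rfl⟩ : ∃ r', r = r' + 1 := ⟨r - 1, by omega⟩
  -- counting setup
  set c0 : ℕ := D0 ^ n with hc0def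
  have hD0pos : 0 < D0 := by omega
  have hc0 : 1 ≤ c0 := Nat.one_le_iff_ne_zero.mpr (pow_ne_zero _ (by omega))
  set t : ℕ := (r' + 1) ^ r' * c0 with htdef
  have ht : 1 ≤ t := Nat.mul_pos (Nat.pow_pos (by omega)) hc0
  set D : ℕ := (r' + 1) * t with hDdef
  obtain ⟨e⟩ : Nonempty (Fin (r' + 2) ↪ σ) :=
    Function.Embedding.nonempty_of_card_le (by simp; omega)
  have degree_single : ∀ (x : σ) (a : ℕ), (Finsupp.single x a).degree = a := by
    intro x a
    rcases Nat.eq_zero_or_pos a with rfl | ha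
    · simp [Finsupp.degree]
    · rw [Finsupp.degree_apply, Finsupp.support_single_ne_zero _ (by omega)]
      simp
  -- the lower-bound injection
  set msum : (Fin (r' + 1) → Fin (t + 1)) → (σ →₀ ℕ) := fun a =>
    (∑ i : Fin (r' + 1), Finsupp.single (e i.castSucc) (a i : ℕ))
    + Finsupp.single (e (Fin.last (r' + 1))) (D - ∑ i, (a i : ℕ)) with hmsum
  have hsumle : ∀ a : Fin (r' + 1) → Fin (t + 1), (∑ i, (a i : ℕ)) ≤ D := by
    intro a
    calc (∑ i, (a i : ℕ)) ≤ ∑ _i : Fin (r' + 1), t :=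
        Finset.sum_le_sum (fun i _ => by omega)
      _ = (r' + 1) * t := by simp [Finset.sum_const, mul_comm]
      _ = D := rfl
  have hval : ∀ (a : Fin (r' + 1) → Fin (t + 1)) (j : Fin (r' + 1)),
      msum a (e j.castSucc) = a j := by
    intro a j
    rw [hmsum]
    simp only [Finsupp.add_apply]
    rw [Finsupp.finset_sum_apply]
    rw [Finset.sum_congr rfl (fun i _ => show (Finsupp.single (e i.castSucc) (a i : ℕ))
        (e j.castSucc) = if i = j then (a i : ℕ) else 0 from by
      rcases eq_or_ne i j with rfl | hij
      · simp [Finsupp.single_apply]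
      · rw [Finsupp.single_apply, if_neg (fun hc =>
          hij (Fin.castSucc_inj.mp (e.injective hc))), if_neg hij])]
    rw [Finset.sum_ite_eq' Finset.univ j (fun i => (a i : ℕ)), if_pos (Finset.mem_univ j),
      Finsupp.single_apply, if_neg (by
        exact fun hlc => absurd (e.injective hlc) (Fin.castSucc_lt_last j).ne'), add_zero]
  have hdeg : ∀ a : Fin (r' + 1) → Fin (t + 1), (msum a).degree = D := by
    intro a
    rw [hmsum]
    have degree_add : ∀ (m m' : σ →₀ ℕ), (m + m').degree = m.degree + m'.degree := by
      intro m m'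
      simp only [Finsupp.degree_eq_weight_one]
      exact map_add _ _ _
    have degree_sum : ∀ (f : Fin (r' + 1) → (σ →₀ ℕ)),
        (∑ i, f i).degree = ∑ i, (f i).degree := by
      intro f
      simp only [Finsupp.degree_eq_weight_one]
      exact map_sum _ _ _
    rw [degree_add, degree_sum]
    rw [Finset.sum_congr rfl (fun i _ => degree_single _ _), degree_single]
    have := hsumle a
    omega
  have hTfin : Finite {m : σ →₀ ℕ // m.degree = D} :=
    Set.Finite.to_subtype (Set.Finite.subset (Finsupp.finite_of_degree_le D)
      (fun m hm => le_of_eq hm))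
  haveI := Fintype.ofFinite {m : σ →₀ ℕ // m.degree = D}
  set φ1 : (Fin (r' + 1) → Fin (t + 1)) → {m : σ →₀ ℕ // m.degree = D} :=
    fun a => ⟨msum a, hdeg a⟩ with hφ1
  have hφ1inj : Function.Injective φ1 := by
    intro a b hab
    have hmm : msum a = msum b := congrArg Subtype.val hab
    funext j
    have := hval a j
    rw [hmm, hval b j] at this
    exact Fin.val_injective this.symm
  -- the upper-bound injection
  set Q : Set ((Fin (r' + 1) → ℕ) × (σ →₀ ℕ)) :=
    {q | (∑ i, q.1 i * d) + q.2.degree = D ∧ q.2.degree < D0} with hQ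
  have hq1le : ∀ q ∈ Q, ∀ j, q.1 j ≤ D := by
    intro q hq j
    obtain ⟨h1, _⟩ := hq
    have h2 : q.1 j * d ≤ ∑ i, q.1 i * d :=
      Finset.single_le_sum (f := fun i => q.1 i * d) (fun _ _ => Nat.zero_le _)
        (Finset.mem_univ j)
    have h3 : q.1 j ≤ q.1 j * d := Nat.le_mul_of_pos_right _ (by omega)
    omega
  set ψ : Q → (Fin r' → Fin (D + 1)) × (σ → Fin D0) := fun q =>
    (fun j => ⟨q.1.1 j.castSucc, by have := hq1le q.1 q.2 j.castSucc; omega⟩,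
     fun s => ⟨q.1.2 s, by have := Finsupp.le_degree s q.1.2; have := q.2.2; omega⟩) with hψ
  have hψinj : Function.Injective ψ := by
    intro q q' hqq
    obtain ⟨hA, hB⟩ := Prod.mk.injEq .. ▸ hqq
    have hcs : ∀ j : Fin r', q.1.1 j.castSucc = q'.1.1 j.castSucc := fun j => by
      have := congrFun hA j
      exact congrArg Fin.val this
    have h2 : q.1.2 = q'.1.2 := by
      ext s
      exact congrArg Fin.val (congrFun hB s)
    have hlast : q.1.1 (Fin.last r') = q'.1.1 (Fin.last r') := by
      have e1 := q.2.1
      have e2 := q'.2.1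
      rw [Fin.sum_univ_castSucc (f := fun i => q.1.1 i * d)] at e1
      rw [Fin.sum_univ_castSucc (f := fun i => q'.1.1 i * d)] at e2
      rw [Finset.sum_congr rfl (fun j _ => by rw [hcs j]), h2] at e1
      have : q.1.1 (Fin.last r') * d = q'.1.1 (Fin.last r') * d := by omega
      exact Nat.eq_of_mul_eq_mul_right (by omega) this
    have h1 : q.1.1 = q'.1.1 := by
      funext x
      induction x using Fin.lastCases with
      | last => exact hlast
      | cast j => exact hcs j
    exact Subtype.ext (Prod.ext h1 h2)
  -- linear independence of monomials of degree D
  set W := Submodule.span K (S D) with hW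
  have hmonoW : ∀ m : {m : σ →₀ ℕ // m.degree = D}, (monomial m.1 1 : MvPolynomial σ K) ∈ W :=
    fun m => claimA D _ (isHomogeneous_monomial 1 m.2)
  set v : {m : σ →₀ ℕ // m.degree = D} → W := fun m => ⟨monomial m.1 1, hmonoW m⟩ with hv
  have hLI0 : LinearIndependent K (fun m : σ →₀ ℕ => (monomial m 1 : MvPolynomial σ K)) := by
    have := (basisMonomials σ K).linearIndependent
    rwa [coe_basisMonomials] at this
  have hLI : LinearIndependent K v := by
    apply LinearIndependent.of_comp W.subtype
    exact hLI0.comp Subtype.val Subtype.val_injective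
  -- finiteness
  haveI hQfin : Finite ↥Q := Finite.of_injective ψ hψinj
  have hQsetfin : Q.Finite := Set.finite_coe_iff.mp hQfin
  have hSfin : (S D).Finite := Set.Finite.image π hQsetfin
  haveI : Module.Finite K W := Module.Finite.span_of_finite K hSfin
  haveI := hSfin.fintype
  -- the counting chain
  have n1 : Fintype.card (Fin (r' + 1) → Fin (t + 1))
      ≤ Fintype.card {m : σ →₀ ℕ // m.degree = D} :=
    Fintype.card_le_of_injective φ1 hφ1inj
  have n2 : Fintype.card {m : σ →₀ ℕ // m.degree = D} ≤ Module.finrank K W :=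
    hLI.fintype_card_le_finrank
  have n3 : Module.finrank K W ≤ (S D).toFinset.card := finrank_span_le_card _
  have n4 : (S D).toFinset.card ≤ Nat.card ↥Q := by
    rw [Set.toFinset_card, ← Nat.card_eq_fintype_card]
    exact Nat.card_image_le hQsetfin
  have n5 : Nat.card ↥Q ≤ Nat.card ((Fin r' → Fin (D + 1)) × (σ → Fin D0)) :=
    Nat.card_le_card_of_injective ψ hψinj
  have n6 : Nat.card ((Fin r' → Fin (D + 1)) × (σ → Fin D0)) = (D + 1) ^ r' * D0 ^ n := by
    rw [Nat.card_eq_fintype_card, Fintype.card_prod, Fintype.card_fun, Fintype.card_fun,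
      Fintype.card_fin, Fintype.card_fin, Fintype.card_fin]
  have n0 : Fintype.card (Fin (r' + 1) → Fin (t + 1)) = (t + 1) ^ (r' + 1) := by
    rw [Fintype.card_fun, Fintype.card_fin, Fintype.card_fin]
  have cAll : (t + 1) ^ (r' + 1) ≤ (D + 1) ^ r' * D0 ^ n := by
    omega
  -- final arithmetic contradiction
  have A1 : (D + 1) ^ r' ≤ (r' + 1) ^ r' * (t + 1) ^ r' := by
    rw [← mul_pow]
    refine Nat.pow_le_pow_left ?_ r'
    calc D + 1 = (r' + 1) * t + 1 := rfl
      _ ≤ (r' + 1) * t + (r' + 1) := by omega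
      _ = (r' + 1) * (t + 1) := (Nat.mul_succ _ _).symm
  have A2 : (t + 1) ^ (r' + 1) ≤ t * (t + 1) ^ r' := by
    calc (t + 1) ^ (r' + 1) ≤ (D + 1) ^ r' * c0 := cAll
      _ ≤ ((r' + 1) ^ r' * (t + 1) ^ r') * c0 := Nat.mul_le_mul_right _ A1
      _ = ((r' + 1) ^ r' * c0) * (t + 1) ^ r' := by ring
      _ = t * (t + 1) ^ r' := by rw [← htdef]
  have hP : 0 < (t + 1) ^ r' := Nat.pow_pos (by omega)
  rw [pow_succ] at A2
  nlinarith [A2, hP]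

end Key



/-- Let `char k = 2` and let `f = ∑_j ℓ_j(y) x_j² + g(y)` be a homogeneous cubic in
variables `x_1,…,x_{m+1}, y_1,…,y_r`, where the `ℓ_j` are linear forms and `g` is a
cubic form in the `y`-variables, with at least one `x`-variable present.  Then the
hypersurface `X = {f = 0} ⊂ ℙ^{n+1}` is singular over the algebraic closure: there is
a nonzero point where `f` and all its partial derivatives vanish. -/
theorem char2_special_cubic_singular
    {k : Type*} [Field k] [CharP k 2] {m r : ℕ}
    (ℓ : Fin (m + 1) → MvPolynomial (Fin r) k) (hℓ : ∀ j, (ℓ j).IsHomogeneous 1)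
    (g : MvPolynomial (Fin r) k) (hg : g.IsHomogeneous 3)
    (f : MvPolynomial (Fin (m + 1) ⊕ Fin r) k)
    (hf : f = (∑ j, MvPolynomial.rename Sum.inr (ℓ j) * MvPolynomial.X (Sum.inl j) ^ 2) +
      MvPolynomial.rename Sum.inr g) :
    ∃ p : Fin (m + 1) ⊕ Fin r → AlgebraicClosure k, p ≠ 0 ∧
      MvPolynomial.eval p (MvPolynomial.map (algebraMap k (AlgebraicClosure k)) f) = 0 ∧
      ∀ i, MvPolynomial.eval p (MvPolynomial.pderiv i
        (MvPolynomial.map (algebraMap k (AlgebraicClosure k)) f)) = 0 := by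
  classical
  set K := AlgebraicClosure k with hK
  haveI : CharP K 2 := charP_of_injective_algebraMap (algebraMap k K).injective 2
  set fK := MvPolynomial.map (algebraMap k K) f with hfKdef
  have hfhom : f.IsHomogeneous 3 := by
    rw [hf]
    refine IsHomogeneous.add ?_ hg.rename_isHomogeneous
    refine IsHomogeneous.sum _ _ _ fun j _ => ?_
    exact ((hℓ j).rename_isHomogeneous).mul (isHomogeneous_X_pow _ _)
  have hfK3 : fK.IsHomogeneous 3 := hfhom.map _
  have h2k : (2 : MvPolynomial (Fin (m + 1) ⊕ Fin r) k) = 0 := by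
    rw [show (2 : MvPolynomial (Fin (m + 1) ⊕ Fin r) k) = C (2 : k) from (map_ofNat C 2).symm,
      show (2 : k) = 0 from CharP.cast_eq_zero k 2, map_zero]
  have hren0 : ∀ (j : Fin (m + 1)) (q : MvPolynomial (Fin r) k),
      pderiv (Sum.inl j) (rename (Sum.inr : Fin r → Fin (m + 1) ⊕ Fin r) q) = 0 := by
    intro j q
    apply pderiv_eq_zero_of_notMem_vars
    intro hmem
    obtain ⟨x, -, hx⟩ := Finset.mem_image.mp (vars_rename _ q hmem)
    cases hx
  have hinlzero : ∀ j, pderiv (Sum.inl j) f = 0 := by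
    intro j
    rw [hf, map_add, map_sum, hren0, add_zero]
    refine Finset.sum_eq_zero fun j' _ => ?_
    rw [pderiv_mul, hren0, zero_mul, zero_add]
    have hXz : pderiv (Sum.inl j) ((X (Sum.inl j') : MvPolynomial (Fin (m + 1) ⊕ Fin r) k) ^ 2) = 0 := by
      rw [pow_two, pderiv_mul]
      rcases eq_or_ne j' j with rfl | hne
      · rw [pderiv_X_self, mul_one, one_mul, ← two_mul, h2k, zero_mul]
      · rw [pderiv_X_of_ne (fun h => hne (Sum.inl.inj h)), zero_mul, mul_zero, add_zero]
    rw [hXz, mul_zero]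
  set F : Fin r → MvPolynomial (Fin (m + 1) ⊕ Fin r) K := fun i => pderiv (Sum.inr i) fK
    with hFdef
  have hF : ∀ i, (F i).IsHomogeneous 2 := fun i => pderiv_isHomogeneous hfK3 _
  obtain ⟨p, hp0, hpF⟩ := key_common_zero (by simp [Fintype.card_sum]) (by norm_num) F hF
  have hvanish : ∀ v, eval p (pderiv v fK) = 0 := by
    rintro (j | i)
    · rw [hfKdef, pderiv_map, hinlzero j, map_zero, map_zero]
    · exact hpF i
  refine ⟨p, hp0, ?_, hvanish⟩
  have hE := congrArg (eval p) (euler_identity hfK3)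
  have hL : (eval p) (∑ v, X v * pderiv v fK) = 0 := by
    rw [map_sum]
    refine Finset.sum_eq_zero fun v _ => ?_
    rw [map_mul, hvanish v, mul_zero]
  rw [hL, map_nsmul] at hE
  have h3 : (3 : K) = 1 := by
    rw [show (3 : K) = 2 + 1 from by norm_num, show (2 : K) = 0 from CharP.cast_eq_zero K 2,
      zero_add]
  rw [nsmul_eq_mul] at hE
  rw [show ((3 : ℕ) : K) = (3 : K) from by norm_cast, h3, one_mul] at hE
  exact hE.symm
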